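/- The map ψ(z,w) = (z + iw, [z − iw]) restricts to a bijection from the quadric Q = {(z,w) : z·z + w·w = 1} onto (ℂ^{d+1} × ℂP^d) ∖ H, where H = {(z,[w]) : z·w = 0}. -/
import Mathlib


/-- The map ψ(z,w) = (z + iw, [z − iw]); where z − iw = 0 (which does not
happen on the quadric) we return an arbitrary projective point. -/
noncomputable def psiMap (d : ℕ)
    (p : (Fin (d+1) → ℂ) × (Fin (d+1) → ℂ)) :
    (Fin (d+1) → ℂ) × Projectivization ℂ (Fin (d+1) → ℂ) :=
  if h : p.1 - Complex.I • p.2 ≠ 0 then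
    (p.1 + Complex.I • p.2, Projectivization.mk ℂ (p.1 - Complex.I • p.2) h)
  else
    (p.1 + Complex.I • p.2, Classical.choice inferInstance)

lemma dot_key (d : ℕ) (z w : Fin (d+1) → ℂ) :
    ∑ k, (z + Complex.I • w) k * (z - Complex.I • w) k
      = ∑ k, z k * z k + ∑ k, w k * w k := by
  rw [← Finset.sum_add_distrib]
  refine Finset.sum_congr rfl fun k _ => ?_
  simp only [Pi.add_apply, Pi.sub_apply, Pi.smul_apply, smul_eq_mul]
  have h := Complex.I_sq
  ring_nf
  rw [Complex.I_sq]
  ring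

/-- ψ(z,w) = (z + iw, [z − iw]) restricts to a bijection from the quadric
Q = {z·z + w·w = 1} onto (ℂ^{d+1} × ℂP^d) ∖ H, H = {(z,[w]) : z·w = 0}. -/
theorem stmt9 (d : ℕ) :
    Set.BijOn (psiMap d)
      {p : (Fin (d+1) → ℂ) × (Fin (d+1) → ℂ) |
        ∑ k, p.1 k * p.1 k + ∑ k, p.2 k * p.2 k = 1}
      ({p : (Fin (d+1) → ℂ) × Projectivization ℂ (Fin (d+1) → ℂ) |
        ∃ (w : Fin (d+1) → ℂ) (hw : w ≠ 0),
          p.2 = Projectivization.mk ℂ w hw ∧ ∑ k, p.1 k * w k = 0}ᶜ) := by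
  constructor
  · -- MapsTo
    rintro ⟨z, w⟩ hzw
    simp only [Set.mem_setOf_eq] at hzw
    have hdot : ∑ k, (z + Complex.I • w) k * (z - Complex.I • w) k = 1 := by
      rw [dot_key]; exact hzw
    have hne : z - Complex.I • w ≠ 0 := by
      intro h
      rw [h] at hdot
      simp at hdot
    simp only [psiMap, dif_pos hne, Set.mem_compl_iff, Set.mem_setOf_eq]
    rintro ⟨v, hv, hmk, hsum⟩
    rw [Projectivization.mk_eq_mk_iff] at hmk
    obtain ⟨a, ha⟩ := hmk
    simp only [Units.smul_def] at ha
    rw [← ha] at hdot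
    have : ∑ k, (z + Complex.I • w) k * ((a : ℂ) • v) k
        = (a : ℂ) * ∑ k, (z + Complex.I • w) k * v k := by
      rw [Finset.mul_sum]
      exact Finset.sum_congr rfl fun k _ => by simp; ring
    rw [this, hsum, mul_zero] at hdot
    exact one_ne_zero hdot.symm
  constructor
  · -- InjOn
    rintro ⟨z, w⟩ hzw ⟨z', w'⟩ hzw' heq
    simp only [Set.mem_setOf_eq] at hzw hzw'
    have hdot : ∑ k, (z + Complex.I • w) k * (z - Complex.I • w) k = 1 := by
      rw [dot_key]; exact hzw
    have hdot' : ∑ k, (z' + Complex.I • w') k * (z' - Complex.I • w') k = 1 := by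
      rw [dot_key]; exact hzw'
    have hne : z - Complex.I • w ≠ 0 := fun h => by rw [h] at hdot; simp at hdot
    have hne' : z' - Complex.I • w' ≠ 0 := fun h => by rw [h] at hdot'; simp at hdot'
    simp only [psiMap, dif_pos hne, dif_pos hne', Prod.mk.injEq] at heq
    obtain ⟨h1, h2⟩ := heq
    rw [Projectivization.mk_eq_mk_iff] at h2
    obtain ⟨a, ha⟩ := h2
    simp only [Units.smul_def] at ha
    -- ha : a • (z' - I w') = z - I w
    have hcalc : ∑ k, (z + Complex.I • w) k * ((a : ℂ) • (z' - Complex.I • w')) k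
        = (a : ℂ) := by
      rw [show ((a:ℂ) • (z' - Complex.I • w')) = fun k => (a:ℂ) * (z' - Complex.I • w') k from rfl]
      calc ∑ k, (z + Complex.I • w) k * ((a:ℂ) * (z' - Complex.I • w') k)
          = (a:ℂ) * ∑ k, (z' + Complex.I • w') k * (z' - Complex.I • w') k := by
            rw [Finset.mul_sum, h1]
            exact Finset.sum_congr rfl fun k _ => by ring
        _ = (a:ℂ) := by rw [hdot']; ring
    rw [ha, hdot] at hcalc
    have ha1 : (a : ℂ) = 1 := hcalc.symm
    rw [ha1, one_smul] at ha
    -- now z + I w = z' + I w' and z - I w = z' - I w'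
    have hz : z = z' := by
      have := congrArg (fun f => (2:ℂ)⁻¹ • f) (congrArg₂ (· + ·) h1 ha.symm)
      simpa [smul_add, smul_sub] using by
        funext k
        have h1k := congrFun h1 k
        have hak := congrFun ha k
        simp only [Pi.add_apply, Pi.sub_apply, Pi.smul_apply, smul_eq_mul] at h1k hak
        have : (2:ℂ) * z k = (2:ℂ) * z' k := by linear_combination h1k - hak
        have h2 : (2:ℂ) ≠ 0 := two_ne_zero
        field_simp at this
        exact this
    have hw : w = w' := by
      funext k
      have h1k := congrFun h1 k
      have hak := congrFun ha k
      simp only [Pi.add_apply, Pi.sub_apply, Pi.smul_apply, smul_eq_mul] at h1k hak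
      have h2 : (2:ℂ) * Complex.I * w k = (2:ℂ) * Complex.I * w' k := by
        linear_combination h1k + hak
      have hI : (2:ℂ) * Complex.I ≠ 0 := by
        simp [Complex.I_ne_zero]
      exact mul_left_cancel₀ hI h2
    rw [hz, hw]
  · -- SurjOn
    rintro ⟨a, q⟩ hp
    simp only [Set.mem_compl_iff, Set.mem_setOf_eq] at hp
    push_neg at hp
    set b := q.rep with hb
    have hbne : b ≠ 0 := q.rep_nonzero
    have hq : q = Projectivization.mk ℂ b hbne := q.mk_rep.symm
    have hc : ∑ k, a k * b k ≠ 0 := hp b hbne hq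
    set c : ℂ := ∑ k, a k * b k with hcdef
    set b' : Fin (d+1) → ℂ := c⁻¹ • b with hb'
    have hb'ne : b' ≠ 0 := by
      rw [hb']
      exact smul_ne_zero (inv_ne_zero hc) hbne
    set z : Fin (d+1) → ℂ := (2:ℂ)⁻¹ • (a + b') with hzdef
    set w : Fin (d+1) → ℂ := (2*Complex.I)⁻¹ • (a - b') with hwdef
    have hzw1 : z + Complex.I • w = a := by
      funext k
      simp only [hzdef, hwdef, Pi.add_apply, Pi.sub_apply, Pi.smul_apply, smul_eq_mul]
      have hI : Complex.I ≠ 0 := Complex.I_ne_zero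
      field_simp
      ring_nf
    have hzw2 : z - Complex.I • w = b' := by
      funext k
      simp only [hzdef, hwdef, Pi.add_apply, Pi.sub_apply, Pi.smul_apply, smul_eq_mul]
      have hI : Complex.I ≠ 0 := Complex.I_ne_zero
      field_simp
      ring_nf
    refine ⟨(z, w), ?_, ?_⟩
    · simp only [Set.mem_setOf_eq]
      have := dot_key d z w
      rw [hzw1, hzw2] at this
      rw [← this, hb']
      have : ∑ k, a k * (c⁻¹ • b) k = c⁻¹ * ∑ k, a k * b k := by
        rw [Finset.mul_sum]
        exact Finset.sum_congr rfl fun k _ => by simp; ring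
      rw [this, ← hcdef, inv_mul_cancel₀ hc]
    · have hne : z - Complex.I • w ≠ 0 := by rw [hzw2]; exact hb'ne
      simp only [psiMap, dif_pos hne]
      refine Prod.ext ?_ ?_
      · simpa using hzw1
      · simp only
        rw [hq]
        rw [Projectivization.mk_eq_mk_iff']
        exact ⟨c⁻¹, by rw [← hb', hzw2]⟩
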